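/- The four-parameter family of exact solutions (3-2*): let d1, d2, d3 be positive real constants with d1 > d3, set κ = 1/√(d1 − d3), and let u0, α0, α1, α2 be real constants. Then the functions u(t,x) = u0·(α0 + α1·sin(κx)·exp(−d1κ²t) + α2·cos(κx)·exp(−d1κ²t)), v(t,x) = 1 − u0·(α0 + α1·sin(κx)·exp(−d1κ²t) + α2·cos(κx)·exp(−d1κ²t)), w(t,x) = u0·((d1 − d2)/(d1 − d3))·(α1·sin(κx)·exp(−d1κ²t) + α2·cos(κx)·exp(−d1κ²t)) satisfy the HGF system (2-3*) at every point (t,x) ∈ ℝ × ℝ. -/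

import Mathlib

private lemma hgf_aux_time (c A D : ℝ) (t : ℝ) :
    HasDerivAt (fun s => D + A * Real.exp (c * s)) (A * (Real.exp (c * t) * c)) t := by
  have h : HasDerivAt (fun s : ℝ => c * s) c t := by
    simpa using (hasDerivAt_id t).const_mul c
  simpa using (h.exp.const_mul A).const_add D

private lemma hgf_aux_sc (κ a b C D : ℝ) (y : ℝ) :
    HasDerivAt (fun z => D + C * (a * Real.sin (κ * z) + b * Real.cos (κ * z)))
      (C * (a * (Real.cos (κ * y) * κ) + b * (-Real.sin (κ * y) * κ))) y := by
  have h : HasDerivAt (fun z : ℝ => κ * z) κ y := by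
    simpa using (hasDerivAt_id y).const_mul κ
  simpa using (((h.sin.const_mul a).add (h.cos.const_mul b)).const_mul C).const_add D

private lemma hgf_aux_deriv2 (κ a b C D : ℝ) (x : ℝ) :
    deriv (fun y => deriv (fun z => D + C * (a * Real.sin (κ * z) + b * Real.cos (κ * z))) y) x
      = -κ ^ 2 * C * (a * Real.sin (κ * x) + b * Real.cos (κ * x)) := by
  have h1 : (fun y => deriv (fun z => D + C * (a * Real.sin (κ * z) + b * Real.cos (κ * z))) y)
      = fun y => 0 + (C * κ) * ((-b) * Real.sin (κ * y) + a * Real.cos (κ * y)) := by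
    funext y
    rw [(hgf_aux_sc κ a b C D y).deriv]; ring
  rw [h1, (hgf_aux_sc κ (-b) a (C * κ) 0 x).deriv]; ring

/-- The four-parameter family of exact solutions (3-2*) of the HGF system (2-3*). -/
theorem hgf_exact_solution_3_2_star
    (d1 d2 d3 : ℝ) (hd1 : 0 < d1) (hd2 : 0 < d2) (hd3 : 0 < d3) (hd13 : d3 < d1)
    (κ : ℝ) (hκ : κ = 1 / Real.sqrt (d1 - d3))
    (u0 α0 α1 α2 : ℝ)
    (u v w : ℝ → ℝ → ℝ)
    (hu : ∀ t x : ℝ, u t x = u0 * (α0 + α1 * Real.sin (κ * x) * Real.exp (-d1 * κ ^ 2 * t)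
        + α2 * Real.cos (κ * x) * Real.exp (-d1 * κ ^ 2 * t)))
    (hv : ∀ t x : ℝ, v t x = 1 - u0 * (α0 + α1 * Real.sin (κ * x) * Real.exp (-d1 * κ ^ 2 * t)
        + α2 * Real.cos (κ * x) * Real.exp (-d1 * κ ^ 2 * t)))
    (hw : ∀ t x : ℝ, w t x = u0 * ((d1 - d2) / (d1 - d3))
        * (α1 * Real.sin (κ * x) * Real.exp (-d1 * κ ^ 2 * t)
          + α2 * Real.cos (κ * x) * Real.exp (-d1 * κ ^ 2 * t))) :
    ∀ t x : ℝ,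
      deriv (fun s => u s x) t
        = d1 * deriv (fun y => deriv (fun z => u t z) y) x
          + u t x * (1 - u t x - v t x) ∧
      deriv (fun s => v s x) t
        = d2 * deriv (fun y => deriv (fun z => v t z) y) x
          + ((d2 - d3) / (d1 - d3)) * (v t x * (1 - u t x - v t x))
          + u t x * w t x + v t x * w t x ∧
      deriv (fun s => w s x) t
        = d3 * deriv (fun y => deriv (fun z => w t z) y) x
          - u t x * w t x - v t x * w t x := by
  intro t x
  have hd : (0:ℝ) < d1 - d3 := by linarith
  have hκ2 : κ ^ 2 = 1 / (d1 - d3) := by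
    rw [hκ, div_pow, one_pow, Real.sq_sqrt hd.le]
  have hratio : (d1 - d2) / (d1 - d3) = (d1 - d2) * κ ^ 2 := by
    rw [hκ2, mul_one_div]
  have hone : (d1 - d3) * κ ^ 2 = 1 := by
    rw [hκ2]; field_simp
  set E : ℝ := Real.exp (-d1 * κ ^ 2 * t) with hE
  set S : ℝ := Real.sin (κ * x) with hS
  set Co : ℝ := Real.cos (κ * x) with hCo
  -- time derivatives
  have hut : deriv (fun s => u s x) t
      = (u0 * (α1 * S + α2 * Co)) * (E * (-d1 * κ ^ 2)) := by
    have heq : (fun s => u s x)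
        = fun s => u0 * α0 + (u0 * (α1 * S + α2 * Co)) * Real.exp (-d1 * κ ^ 2 * s) := by
      funext s; rw [hu]; ring
    rw [heq, (hgf_aux_time (-d1 * κ ^ 2) (u0 * (α1 * S + α2 * Co)) (u0 * α0) t).deriv]
  have hvt : deriv (fun s => v s x) t
      = (-(u0 * (α1 * S + α2 * Co))) * (E * (-d1 * κ ^ 2)) := by
    have heq : (fun s => v s x)
        = fun s => (1 - u0 * α0) + (-(u0 * (α1 * S + α2 * Co))) * Real.exp (-d1 * κ ^ 2 * s) := by
      funext s; rw [hv]; ring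
    rw [heq, (hgf_aux_time (-d1 * κ ^ 2) (-(u0 * (α1 * S + α2 * Co))) (1 - u0 * α0) t).deriv]
  have hwt : deriv (fun s => w s x) t
      = (u0 * ((d1 - d2) / (d1 - d3)) * (α1 * S + α2 * Co)) * (E * (-d1 * κ ^ 2)) := by
    have heq : (fun s => w s x)
        = fun s => 0 + (u0 * ((d1 - d2) / (d1 - d3)) * (α1 * S + α2 * Co))
            * Real.exp (-d1 * κ ^ 2 * s) := by
      funext s; rw [hw]; ring
    rw [heq, (hgf_aux_time (-d1 * κ ^ 2)
      (u0 * ((d1 - d2) / (d1 - d3)) * (α1 * S + α2 * Co)) 0 t).deriv]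
  -- space second derivatives
  have huxx : deriv (fun y => deriv (fun z => u t z) y) x
      = -κ ^ 2 * (u0 * E) * (α1 * S + α2 * Co) := by
    have heq : (fun z => u t z)
        = fun z => u0 * α0 + (u0 * E) * (α1 * Real.sin (κ * z) + α2 * Real.cos (κ * z)) := by
      funext z; rw [hu]; ring
    rw [heq, hgf_aux_deriv2 κ α1 α2 (u0 * E) (u0 * α0) x]
  have hvxx : deriv (fun y => deriv (fun z => v t z) y) x
      = -κ ^ 2 * (-(u0 * E)) * (α1 * S + α2 * Co) := by
    have heq : (fun z => v t z)
        = fun z => (1 - u0 * α0) + (-(u0 * E)) * (α1 * Real.sin (κ * z) + α2 * Real.cos (κ * z)) := by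
      funext z; rw [hv]; ring
    rw [heq, hgf_aux_deriv2 κ α1 α2 (-(u0 * E)) (1 - u0 * α0) x]
  have hwxx : deriv (fun y => deriv (fun z => w t z) y) x
      = -κ ^ 2 * (u0 * ((d1 - d2) / (d1 - d3)) * E) * (α1 * S + α2 * Co) := by
    have heq : (fun z => w t z)
        = fun z => 0 + (u0 * ((d1 - d2) / (d1 - d3)) * E)
            * (α1 * Real.sin (κ * z) + α2 * Real.cos (κ * z)) := by
      funext z; rw [hw]; ring
    rw [heq, hgf_aux_deriv2 κ α1 α2 (u0 * ((d1 - d2) / (d1 - d3)) * E) 0 x]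
  have huv : u t x = u0 * (α0 + α1 * S * E + α2 * Co * E) := hu t x
  have hvv : v t x = 1 - u0 * (α0 + α1 * S * E + α2 * Co * E) := hv t x
  have hwv : w t x = u0 * ((d1 - d2) / (d1 - d3)) * (α1 * S * E + α2 * Co * E) := hw t x
  refine ⟨?_, ?_, ?_⟩
  · rw [hut, huxx, huv, hvv]; ring
  · rw [hvt, hvxx, huv, hvv, hwv, hratio]; ring
  · rw [hwt, hwxx, huv, hvv, hwv, hratio]
    linear_combination (-(u0 * (d1 - d2) * κ ^ 2 * (α1 * S + α2 * Co) * E)) * hone
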